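/- Suppose B is an observation barrier function (OBF) with level q. Then the process (Y_n)_{0 ≤ n ≤ t_k + 1} is a submartingale with respect to (𝓕_n): for every n ≤ t_k, E[Y_{n+1} | 𝓕_n] ≥ Y_n almost surely; consequently E[Y_{t_k+1}] ≥ E[Y_0] ≥ q. -/
import Mathlib


open MeasureTheory

/-- The process `Y n = (∏_{i<n} 1[X_i ∉ U]) ⬝ (∏_{t_i < n} 1[X_{t_i} ∈ O_i]) ⬝ B(n, X_n)`. -/
noncomputable def Yproc {Ω 𝒳 : Type*} (X : ℕ → Ω → 𝒳) (U : Set 𝒳) {k : ℕ}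
    (t : Fin (k + 1) → ℕ) (O : Fin (k + 1) → Set 𝒳) (B : ℕ → 𝒳 → ℝ)
    (n : ℕ) (ω : Ω) : ℝ :=
  (∏ i ∈ Finset.range n, Set.indicator Uᶜ (fun _ => (1 : ℝ)) (X i ω)) *
    ((∏ i ∈ Finset.univ.filter (fun i : Fin (k + 1) => t i < n),
        Set.indicator (O i) (fun _ => (1 : ℝ)) (X (t i) ω)) *
      B n (X n ω))

/-- The prefix process (product of indicators). -/
noncomputable def PhiAux {Ω 𝒳 : Type*} (X : ℕ → Ω → 𝒳) (U : Set 𝒳) {k : ℕ}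
    (t : Fin (k + 1) → ℕ) (O : Fin (k + 1) → Set 𝒳) (n : ℕ) (ω : Ω) : ℝ :=
  (∏ i ∈ Finset.range n, Set.indicator Uᶜ (fun _ => (1 : ℝ)) (X i ω)) *
    ∏ i ∈ Finset.univ.filter (fun i : Fin (k + 1) => t i < n),
      Set.indicator (O i) (fun _ => (1 : ℝ)) (X (t i) ω)

lemma Yproc_eq_phi {Ω 𝒳 : Type*} (X : ℕ → Ω → 𝒳) (U : Set 𝒳) {k : ℕ}
    (t : Fin (k + 1) → ℕ) (O : Fin (k + 1) → Set 𝒳) (B : ℕ → 𝒳 → ℝ) (n : ℕ) :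
    Yproc X U t O B n = fun ω => PhiAux X U t O n ω * B n (X n ω) := by
  funext ω
  simp [Yproc, PhiAux, mul_assoc]

lemma indicator_one_nonneg {𝒳 : Type*} (s : Set 𝒳) (x : 𝒳) :
    0 ≤ Set.indicator s (fun _ => (1 : ℝ)) x := by
  classical
  rw [Set.indicator_apply]
  split_ifs <;> norm_num

lemma indicator_one_le_one {𝒳 : Type*} (s : Set 𝒳) (x : 𝒳) :
    Set.indicator s (fun _ => (1 : ℝ)) x ≤ 1 := by
  classical
  rw [Set.indicator_apply]
  split_ifs <;> norm_num

lemma phiAux_nonneg {Ω 𝒳 : Type*} (X : ℕ → Ω → 𝒳) (U : Set 𝒳) {k : ℕ}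
    (t : Fin (k + 1) → ℕ) (O : Fin (k + 1) → Set 𝒳) (n : ℕ) (ω : Ω) :
    0 ≤ PhiAux X U t O n ω :=
  mul_nonneg (Finset.prod_nonneg fun i _ => indicator_one_nonneg _ _)
    (Finset.prod_nonneg fun i _ => indicator_one_nonneg _ _)

lemma phiAux_le_one {Ω 𝒳 : Type*} (X : ℕ → Ω → 𝒳) (U : Set 𝒳) {k : ℕ}
    (t : Fin (k + 1) → ℕ) (O : Fin (k + 1) → Set 𝒳) (n : ℕ) (ω : Ω) :
    PhiAux X U t O n ω ≤ 1 := by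
  have h1 : (∏ i ∈ Finset.range n, Set.indicator Uᶜ (fun _ => (1 : ℝ)) (X i ω)) ≤ 1 :=
    Finset.prod_le_one (fun i _ => indicator_one_nonneg _ _) (fun i _ => indicator_one_le_one _ _)
  have h2 : (∏ i ∈ Finset.univ.filter (fun i : Fin (k + 1) => t i < n),
      Set.indicator (O i) (fun _ => (1 : ℝ)) (X (t i) ω)) ≤ 1 :=
    Finset.prod_le_one (fun i _ => indicator_one_nonneg _ _) (fun i _ => indicator_one_le_one _ _)
  have := mul_le_mul h1 h2 (Finset.prod_nonneg fun i _ => indicator_one_nonneg _ _) zero_le_one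
  simpa [PhiAux] using this

lemma phiAux_succ {Ω 𝒳 : Type*} (X : ℕ → Ω → 𝒳) (U : Set 𝒳) {k : ℕ}
    (t : Fin (k + 1) → ℕ) (O : Fin (k + 1) → Set 𝒳) (n : ℕ) (ω : Ω) :
    PhiAux X U t O (n + 1) ω = PhiAux X U t O n ω *
      (Set.indicator Uᶜ (fun _ => (1 : ℝ)) (X n ω) *
        ∏ i ∈ Finset.univ.filter (fun i : Fin (k + 1) => t i = n),
          Set.indicator (O i) (fun _ => (1 : ℝ)) (X (t i) ω)) := by
  classical
  have hfilter : (Finset.univ.filter (fun i : Fin (k + 1) => t i < n + 1)) =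
      (Finset.univ.filter (fun i : Fin (k + 1) => t i < n)) ∪
        (Finset.univ.filter (fun i : Fin (k + 1) => t i = n)) := by
    ext i
    simp [Nat.lt_succ_iff, Nat.le_iff_lt_or_eq]
  have hdisj : Disjoint (Finset.univ.filter (fun i : Fin (k + 1) => t i < n))
      (Finset.univ.filter (fun i : Fin (k + 1) => t i = n)) := by
    rw [Finset.disjoint_left]
    intro i h1 h2
    simp only [Finset.mem_filter] at h1 h2
    omega
  rw [PhiAux, PhiAux, Finset.prod_range_succ, hfilter, Finset.prod_union hdisj]
  ring

lemma phiAux_measurable {Ω 𝒳 : Type*} {m0 : MeasurableSpace Ω} (𝓕 : Filtration ℕ m0)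
    [MeasurableSpace 𝒳] (X : ℕ → Ω → 𝒳) (hX_adapted : ∀ n, Measurable[𝓕 n] (X n))
    (U : Set 𝒳) (hU : MeasurableSet U) {k : ℕ}
    (t : Fin (k + 1) → ℕ) (O : Fin (k + 1) → Set 𝒳) (hO : ∀ i, MeasurableSet (O i))
    (n m : ℕ) (hnm : n ≤ m + 1) :
    Measurable[𝓕 m] (PhiAux X U t O n) := by
  apply Measurable.mul
  · apply Finset.measurable_prod
    intro i hi
    rw [Finset.mem_range] at hi
    have hXi : Measurable[𝓕 m] (X i) :=
      (hX_adapted i).mono (𝓕.mono (by omega)) le_rfl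
    exact (measurable_const.indicator hU.compl).comp hXi
  · apply Finset.measurable_prod
    intro i hi
    rw [Finset.mem_filter] at hi
    have hXi : Measurable[𝓕 m] (X (t i)) :=
      (hX_adapted (t i)).mono (𝓕.mono (by omega)) le_rfl
    exact (measurable_const.indicator (hO i)).comp hXi

/-- If `B` is an OBF with level `q`, the process `(Y_n)_{n ≤ t_k + 1}` is a
submartingale w.r.t. `𝓕`, and `E[Y_{t_k+1}] ≥ E[Y_0] ≥ q`. -/
theorem obf_submartingale
    {Ω : Type*} {m0 : MeasurableSpace Ω} (ℙ : Measure Ω) [IsProbabilityMeasure ℙ]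
    (𝓕 : Filtration ℕ m0)
    {𝒳 : Type*} [MeasurableSpace 𝒳]
    (X : ℕ → Ω → 𝒳) (hX_adapted : ∀ n, Measurable[𝓕 n] (X n))
    (x₀ : 𝒳) (hX0 : ∀ᵐ ω ∂ℙ, X 0 ω = x₀)
    (U : Set 𝒳) (hU : MeasurableSet U)
    (k : ℕ) (t : Fin (k + 1) → ℕ) (ht : StrictMono t)
    (O : Fin (k + 1) → Set 𝒳) (hO : ∀ i, MeasurableSet (O i))
    (B : ℕ → 𝒳 → ℝ)
    (hB_meas : ∀ n, Measurable (B n))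
    (hB_bdd : ∀ n, ∃ C : ℝ, ∀ x, |B n x| ≤ C)
    (q : ℝ)
    -- (i) initial condition
    (h_init : q ≤ B 0 x₀)
    -- (ii) submartingale (drift) condition on the guard set `G n`
    (h_drift : ∀ n ≤ t (Fin.last k), ∀ᵐ ω ∂ℙ,
      (X n ω ∉ U ∧ ∀ i, t i = n → X n ω ∈ O i) →
        B n (X n ω) ≤ (ℙ[fun ω' => B (n + 1) (X (n + 1) ω') | 𝓕 n]) ω)
    -- (iii) nonpositivity outside the guard set
    (h_nonpos : ∀ n ≤ t (Fin.last k), ∀ x : 𝒳,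
      ¬(x ∉ U ∧ ∀ i, t i = n → x ∈ O i) → B n x ≤ 0)
    -- (iv) terminal bound
    (h_term : ∀ x : 𝒳, B (t (Fin.last k) + 1) x ≤ 1) :
    (∀ n ≤ t (Fin.last k), ∀ᵐ ω ∂ℙ,
        Yproc X U t O B n ω ≤ (ℙ[Yproc X U t O B (n + 1) | 𝓕 n]) ω) ∧
      q ≤ ∫ ω, Yproc X U t O B 0 ω ∂ℙ ∧
      ∫ ω, Yproc X U t O B 0 ω ∂ℙ ≤ ∫ ω, Yproc X U t O B (t (Fin.last k) + 1) ω ∂ℙ := by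
  classical
  -- basic measurability / integrability facts
  have hBX_int : ∀ n, Integrable (fun ω => B n (X n ω)) ℙ := by
    intro n
    obtain ⟨C, hC⟩ := hB_bdd n
    have hmeas : Measurable (fun ω => B n (X n ω)) :=
      (hB_meas n).comp ((hX_adapted n).mono (𝓕.le n) le_rfl)
    exact (integrable_const C).mono' hmeas.aestronglyMeasurable
      (Filter.Eventually.of_forall fun ω => by simpa using hC (X n ω))
  have hY_meas : ∀ n, Measurable (Yproc X U t O B n) := by
    intro n
    rw [Yproc_eq_phi]
    exact ((phiAux_measurable 𝓕 X hX_adapted U hU t O hO n n (by omega)).mono (𝓕.le n)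
      le_rfl).mul ((hB_meas n).comp ((hX_adapted n).mono (𝓕.le n) le_rfl))
  have hY_int : ∀ n, Integrable (Yproc X U t O B n) ℙ := by
    intro n
    obtain ⟨C, hC⟩ := hB_bdd n
    refine (integrable_const C).mono' (hY_meas n).aestronglyMeasurable
      (Filter.Eventually.of_forall fun ω => ?_)
    rw [Yproc_eq_phi]
    simp only [Real.norm_eq_abs]
    rw [abs_mul, abs_of_nonneg (phiAux_nonneg X U t O n ω)]
    calc PhiAux X U t O n ω * |B n (X n ω)| ≤ 1 * C :=
          mul_le_mul (phiAux_le_one X U t O n ω) (hC _) (abs_nonneg _) zero_le_one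
      _ = C := one_mul C
  -- part 1: submartingale property
  have step : ∀ n ≤ t (Fin.last k), ∀ᵐ ω ∂ℙ,
      Yproc X U t O B n ω ≤ (ℙ[Yproc X U t O B (n + 1) | 𝓕 n]) ω := by
    intro n hn
    have hΦm : StronglyMeasurable[𝓕 n] (PhiAux X U t O (n + 1)) :=
      (phiAux_measurable 𝓕 X hX_adapted U hU t O hO (n + 1) n le_rfl).stronglyMeasurable
    have hmul_int : Integrable (PhiAux X U t O (n + 1) * fun ω => B (n + 1) (X (n + 1) ω)) ℙ := by
      have := hY_int (n + 1)
      rwa [Yproc_eq_phi] at this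
    have hpull := condExp_mul_of_stronglyMeasurable_left (μ := ℙ) hΦm hmul_int (hBX_int (n + 1))
    have hYeq : Yproc X U t O B (n + 1) =
        PhiAux X U t O (n + 1) * fun ω => B (n + 1) (X (n + 1) ω) := Yproc_eq_phi X U t O B (n + 1)
    rw [hYeq]
    filter_upwards [hpull, h_drift n hn] with ω hω hdω
    rw [hω]
    rw [Yproc_eq_phi]
    simp only [Pi.mul_apply]
    by_cases hguard : X n ω ∉ U ∧ ∀ i, t i = n → X n ω ∈ O i
    · have hB := hdω hguard
      have hE : Set.indicator Uᶜ (fun _ => (1 : ℝ)) (X n ω) *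
          ∏ i ∈ Finset.univ.filter (fun i : Fin (k + 1) => t i = n),
            Set.indicator (O i) (fun _ => (1 : ℝ)) (X (t i) ω) = 1 := by
        rw [Set.indicator_of_mem (Set.mem_compl hguard.1), one_mul]
        apply Finset.prod_eq_one
        intro i hi
        rw [Finset.mem_filter] at hi
        rw [Set.indicator_of_mem]
        rw [hi.2]
        exact hguard.2 i hi.2
      rw [phiAux_succ, hE, mul_one]
      exact mul_le_mul_of_nonneg_left hB (phiAux_nonneg X U t O n ω)
    · have hBn : B n (X n ω) ≤ 0 := h_nonpos n hn _ hguard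
      have hlhs : PhiAux X U t O n ω * B n (X n ω) ≤ 0 := by
        have := mul_le_mul_of_nonneg_left hBn (phiAux_nonneg X U t O n ω)
        simpa using this
      have hΦ0 : PhiAux X U t O (n + 1) ω = 0 := by
        rw [phiAux_succ]
        push_neg at hguard
        by_cases hXU : X n ω ∈ U
        · rw [Set.indicator_of_notMem (by simpa using hXU)]
          ring
        · obtain ⟨i, hti, hXO⟩ := hguard hXU
          have : (∏ j ∈ Finset.univ.filter (fun j : Fin (k + 1) => t j = n),
              Set.indicator (O j) (fun _ => (1 : ℝ)) (X (t j) ω)) = 0 := by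
            apply Finset.prod_eq_zero (Finset.mem_filter.mpr ⟨Finset.mem_univ i, hti⟩)
            rw [Set.indicator_of_notMem]
            rw [hti]
            exact hXO
          rw [this]
          ring
      rw [hΦ0, zero_mul]
      exact hlhs
  refine ⟨step, ?_, ?_⟩
  -- part 2: q ≤ E[Y 0]
  · have hY0 : ∀ᵐ ω ∂ℙ, Yproc X U t O B 0 ω = B 0 x₀ := by
      filter_upwards [hX0] with ω hω
      simp [Yproc, hω]
    rw [integral_congr_ae hY0]
    simpa using h_init
  -- part 3: E[Y 0] ≤ E[Y (t_k + 1)]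
  · have key : ∀ m, m ≤ t (Fin.last k) + 1 →
        ∫ ω, Yproc X U t O B 0 ω ∂ℙ ≤ ∫ ω, Yproc X U t O B m ω ∂ℙ := by
      intro m
      induction m with
      | zero => intro _; exact le_rfl
      | succ m ih =>
        intro hm
        have hmle : m ≤ t (Fin.last k) := by omega
        refine (ih (by omega)).trans ?_
        have h1 : ∫ ω, Yproc X U t O B m ω ∂ℙ ≤ ∫ ω, (ℙ[Yproc X U t O B (m + 1) | 𝓕 m]) ω ∂ℙ :=
          integral_mono_ae (hY_int m) integrable_condExp (step m hmle)
        rwa [integral_condExp (𝓕.le m)] at h1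
    exact key (t (Fin.last k) + 1) le_rfl
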